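/- Assume in addition that K is algebraically closed. Then for every K-linear bijection f of the space of 3×3 trace-zero matrices over K satisfying f(x∗y) = f(x)∗f(y) for all trace-zero x, y, there exists an invertible 3×3 matrix p over K such that f(x) = p·x·p⁻¹ for all trace-zero x. (The automorphism group of the pseudo-octonion algebra is Int(sl(3,K)) ≅ PGL(3,K).) -/

import Mathlib

/-- The product of the pseudo-octonion algebra on `3 × 3` matrices:
`x ∗ y = μ·xy + (1−μ)·yx − (1/3)·tr(xy)·I₃`. -/
noncomputable def pstar (K : Type*) [Field K] (μ : K)
    (x y : Matrix (Fin 3) (Fin 3) K) : Matrix (Fin 3) (Fin 3) K :=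
  μ • (x * y) + (1 - μ) • (y * x) - ((x * y).trace / 3) • (1 : Matrix (Fin 3) (Fin 3) K)

/-- The space of `3 × 3` trace-zero matrices over `K`. -/
noncomputable def sl3 (K : Type*) [Field K] : Submodule K (Matrix (Fin 3) (Fin 3) K) :=
  LinearMap.ker (Matrix.traceLinearMap (Fin 3) K K)


section Aux

variable {K : Type*} [Field K] [CharZero K]

lemma mem_sl3 {m : Matrix (Fin 3) (Fin 3) K} (hm : m.trace = 0) : m ∈ sl3 K := by
  simp [sl3, LinearMap.mem_ker, hm]

lemma sl3_trace (x : sl3 K) : (x : Matrix (Fin 3) (Fin 3) K).trace = 0 := x.2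

lemma ch3 (m : Matrix (Fin 3) (Fin 3) K) (hm : m.trace = 0) :
    m * m * m = ((m * m).trace / 2) • m +
      (((m * m) * m).trace / 3) • (1 : Matrix (Fin 3) (Fin 3) K) := by
  have h22 : m 2 2 = -(m 0 0 + m 1 1) := by
    simp [Matrix.trace, Fin.sum_univ_three, Matrix.diag] at hm; linear_combination hm
  ext i j
  fin_cases i <;> fin_cases j <;>
    · simp [Matrix.mul_apply, Fin.sum_univ_three, Matrix.trace, Matrix.diag,
        Matrix.smul_apply, Matrix.one_apply, Matrix.add_apply, h22]
      field_simp
      ring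

lemma pstar_self (μ : K) (m : Matrix (Fin 3) (Fin 3) K) :
    pstar K μ m m = m * m - ((m * m).trace / 3) • (1 : Matrix (Fin 3) (Fin 3) K) := by
  unfold pstar
  module

lemma pstar_trace (μ : K) (x y : Matrix (Fin 3) (Fin 3) K) :
    (pstar K μ x y).trace = 0 := by
  simp [pstar, Matrix.trace_smul, Matrix.trace_sub, Matrix.trace_add, Matrix.trace_one,
    Matrix.trace_mul_comm y x, smul_eq_mul]
  ring

lemma pstar_cube (μ : K) (m : Matrix (Fin 3) (Fin 3) K) (hm : m.trace = 0) :
    pstar K μ (pstar K μ m m) m = (((m * m).trace / 6) • m : Matrix (Fin 3) (Fin 3) K) := by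
  have h1 : (m * m - ((m * m).trace / 3) • 1) * m = m * m * m - ((m * m).trace / 3) • m := by
    rw [sub_mul, Matrix.smul_mul, one_mul]
  have h2 : m * (m * m - ((m * m).trace / 3) • 1) = m * m * m - ((m * m).trace / 3) • m := by
    rw [mul_sub, Matrix.mul_smul, mul_one, ← mul_assoc]
  rw [pstar_self, pstar, h1, h2, Matrix.trace_sub, Matrix.trace_smul, hm, smul_zero,
    sub_zero, ch3 m hm]
  generalize (m * m).trace = t
  match_scalars
  all_goals field_simp
  all_goals try ring
  all_goals simp [Matrix.trace_add, Matrix.trace_smul, Matrix.trace_one, hm]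

lemma pstar_combo (μ : K) (hμ : 2 * μ - 1 ≠ 0) (x y : Matrix (Fin 3) (Fin 3) K) :
    (μ / (2 * μ - 1)) • pstar K μ x y - ((1 - μ) / (2 * μ - 1)) • pstar K μ y x
      = x * y - ((x * y).trace / 3) • (1 : Matrix (Fin 3) (Fin 3) K) := by
  unfold pstar
  rw [Matrix.trace_mul_comm y x]
  match_scalars
  all_goals field_simp
  all_goals try ring
  all_goals (field_simp [show -1 + μ * 2 ≠ 0 by contrapose! hμ; linear_combination hμ]; ring)

/-- product on `sl3`. -/
noncomputable def sl3.pmul (μ : K) (x y : sl3 K) : sl3 K :=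
  ⟨pstar K μ x y, mem_sl3 (pstar_trace μ _ _)⟩

/-- trace-free projection into `sl3`. -/
noncomputable def sl3.proj (m : Matrix (Fin 3) (Fin 3) K) : sl3 K :=
  ⟨m - (m.trace / 3) • 1, mem_sl3 (by
    simp [Matrix.trace_sub, Matrix.trace_smul, Matrix.trace_one]
    try ring)⟩

/-- extension of an `sl3`-map to all matrices, fixing scalars. -/
noncomputable def phiOf (f : sl3 K ≃ₗ[K] sl3 K) (m : Matrix (Fin 3) (Fin 3) K) :
    Matrix (Fin 3) (Fin 3) K :=
  (f (sl3.proj m) : Matrix (Fin 3) (Fin 3) K) + (m.trace / 3) • 1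

end Aux

open scoped Matrix

set_option maxHeartbeats 1600000 in
/-- Over an algebraically closed field, every automorphism of the pseudo-octonion algebra
is conjugation by an invertible matrix: `Aut(P) ≅ Int(sl(3,K)) ≅ PGL(3,K)`. -/
theorem pseudoOctonion_aut_is_inner
    (K : Type*) [Field K] [CharZero K] [IsAlgClosed K]
    (ω : K) (hω1 : ω ≠ 1) (hω3 : ω ^ 3 = 1)
    (f : sl3 K ≃ₗ[K] sl3 K)
    (hf : ∀ x y z : sl3 K,
      (z : Matrix (Fin 3) (Fin 3) K) = pstar K ((1 - ω) / 3) x y →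
      (f z : Matrix (Fin 3) (Fin 3) K) = pstar K ((1 - ω) / 3) (f x) (f y)) :
    ∃ p : Matrix (Fin 3) (Fin 3) K, IsUnit p ∧
      ∀ x : sl3 K,
        (f x : Matrix (Fin 3) (Fin 3) K) = p * (x : Matrix (Fin 3) (Fin 3) K) * p⁻¹ := by
  classical
  set μ : K := (1 - ω) / 3 with hμdef
  have h2μ : 2 * μ - 1 ≠ 0 := by
    intro h
    rw [hμdef] at h
    have hω' : ω = -(1 / 2 : K) := by
      field_simp at h
      linear_combination -h / 2
    rw [hω'] at hω3
    norm_num at hω3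
  -- f respects the pmul product
  have hfm : ∀ x y : sl3 K,
      (f (sl3.pmul μ x y) : Matrix (Fin 3) (Fin 3) K) = pstar K μ (f x) (f y) := fun x y => hf x y _ rfl
  -- quadratic trace form is preserved
  have key : ∀ x : sl3 K, ((f x : Matrix (Fin 3) (Fin 3) K) * (f x : Matrix (Fin 3) (Fin 3) K)).trace = ((x : Matrix (Fin 3) (Fin 3) K) * (x : Matrix (Fin 3) (Fin 3) K)).trace := by
    intro x
    rcases eq_or_ne x 0 with rfl | hx
    · simp
    have h2 := hfm (sl3.pmul μ x x) x
    rw [hfm x x, pstar_cube μ _ (sl3_trace (f x))] at h2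
    have h3 : sl3.pmul μ (sl3.pmul μ x x) x = (((x : Matrix (Fin 3) (Fin 3) K) * (x : Matrix (Fin 3) (Fin 3) K)).trace / 6) • x := by
      apply Subtype.ext
      show pstar K μ (pstar K μ (x : Matrix (Fin 3) (Fin 3) K) (x : Matrix (Fin 3) (Fin 3) K)) (x : Matrix (Fin 3) (Fin 3) K) = _
      rw [pstar_cube μ _ (sl3_trace x)]
      rfl
    rw [h3, map_smul] at h2
    have h4 : ((((x : Matrix (Fin 3) (Fin 3) K) * (x : Matrix (Fin 3) (Fin 3) K)).trace / 6) • (f x : Matrix (Fin 3) (Fin 3) K) : Matrix (Fin 3) (Fin 3) K)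
        = (((f x : Matrix (Fin 3) (Fin 3) K) * (f x : Matrix (Fin 3) (Fin 3) K)).trace / 6) • (f x : Matrix (Fin 3) (Fin 3) K) := by
      rw [← h2]; rfl
    have hfx : (f x : Matrix (Fin 3) (Fin 3) K) ≠ 0 := by
      intro h0
      exact hx (f.map_eq_zero_iff.mp (Submodule.coe_eq_zero.mp h0))
    have h5 : ((((x : Matrix (Fin 3) (Fin 3) K) * (x : Matrix (Fin 3) (Fin 3) K)).trace / 6) - (((f x : Matrix (Fin 3) (Fin 3) K) * (f x : Matrix (Fin 3) (Fin 3) K)).trace / 6))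
        • (f x : Matrix (Fin 3) (Fin 3) K) = 0 := by
      rw [sub_smul, h4, sub_self]
    rcases smul_eq_zero.mp h5 with h | h
    · linear_combination -(6 : K) * h
    · exact absurd h hfx
  -- polarization: the bilinear trace form is preserved
  have tpres : ∀ x y : sl3 K,
      ((f x : Matrix (Fin 3) (Fin 3) K) * (f y : Matrix (Fin 3) (Fin 3) K)).trace = ((x : Matrix (Fin 3) (Fin 3) K) * (y : Matrix (Fin 3) (Fin 3) K)).trace := by
    intro x y
    have hxy := key (x + y)
    have hx := key x
    have hy := key y
    have e1 : ∀ a b : Matrix (Fin 3) (Fin 3) K, (a + b) * (a + b) = a * a + a * b + b * a + b * b := by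
      intro a b; noncomm_ring
    simp only [map_add, Submodule.coe_add] at hxy
    rw [e1, e1] at hxy
    simp only [Matrix.trace_add] at hxy
    rw [Matrix.trace_mul_comm ((y : Matrix (Fin 3) (Fin 3) K)) ((x : Matrix (Fin 3) (Fin 3) K)),
      Matrix.trace_mul_comm ((f y : Matrix (Fin 3) (Fin 3) K)) ((f x : Matrix (Fin 3) (Fin 3) K))] at hxy
    linear_combination (hxy - hx - hy) / 2
  -- f preserves the (projected) associative product
  have hmul : ∀ x y : sl3 K, ∃ z : sl3 K,
      (z : Matrix (Fin 3) (Fin 3) K) = (x : Matrix (Fin 3) (Fin 3) K) * (y : Matrix (Fin 3) (Fin 3) K) - (((x : Matrix (Fin 3) (Fin 3) K) * (y : Matrix (Fin 3) (Fin 3) K)).trace / 3) • 1 ∧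
      (f z : Matrix (Fin 3) (Fin 3) K) = (f x : Matrix (Fin 3) (Fin 3) K) * (f y : Matrix (Fin 3) (Fin 3) K) - (((x : Matrix (Fin 3) (Fin 3) K) * (y : Matrix (Fin 3) (Fin 3) K)).trace / 3) • 1 := by
    intro x y
    refine ⟨(μ / (2 * μ - 1)) • sl3.pmul μ x y - ((1 - μ) / (2 * μ - 1)) • sl3.pmul μ y x,
      ?_, ?_⟩
    · show (μ / (2 * μ - 1)) • pstar K μ (x : Matrix (Fin 3) (Fin 3) K) (y : Matrix (Fin 3) (Fin 3) K)
          - ((1 - μ) / (2 * μ - 1)) • pstar K μ (y : Matrix (Fin 3) (Fin 3) K) (x : Matrix (Fin 3) (Fin 3) K) = _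
      exact pstar_combo μ h2μ _ _
    · rw [map_sub, map_smul, map_smul]
      show (μ / (2 * μ - 1)) • (f (sl3.pmul μ x y) : Matrix (Fin 3) (Fin 3) K)
          - ((1 - μ) / (2 * μ - 1)) • (f (sl3.pmul μ y x) : Matrix (Fin 3) (Fin 3) K) = _
      rw [hfm x y, hfm y x, pstar_combo μ h2μ, tpres x y]
  -- the extension φ
  set φ : Matrix (Fin 3) (Fin 3) K → Matrix (Fin 3) (Fin 3) K := phiOf f with hφ
  have φproj : ∀ m : Matrix (Fin 3) (Fin 3) K, ((sl3.proj m : sl3 K) : Matrix (Fin 3) (Fin 3) K) = m - (m.trace / 3) • 1 := fun m => rfl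
  have φdef : ∀ m : Matrix (Fin 3) (Fin 3) K, φ m = (f (sl3.proj m) : Matrix (Fin 3) (Fin 3) K) + (m.trace / 3) • 1 := fun m => rfl
  have φzero : φ 0 = 0 := by
    rw [φdef]
    have : sl3.proj (0 : Matrix (Fin 3) (Fin 3) K) = 0 := Subtype.ext (by simp [φproj])
    simp [this]
  have φlin : ∀ (c : K) (m n : Matrix (Fin 3) (Fin 3) K), φ (c • m + n) = c • φ m + φ n := by
    intro c m n
    have hp : sl3.proj (c • m + n) = c • sl3.proj m + sl3.proj n := by
      apply Subtype.ext
      show ((c • m + n : Matrix (Fin 3) (Fin 3) K)) - ((c • m + n).trace / 3) • 1 = _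
      have : ((c • sl3.proj m + sl3.proj n : sl3 K) : Matrix (Fin 3) (Fin 3) K)
          = c • (m - (m.trace / 3) • 1) + (n - (n.trace / 3) • 1) := rfl
      rw [this, Matrix.trace_add, Matrix.trace_smul]
      match_scalars <;> (try field_simp; try ring)
    rw [φdef, φdef, φdef, hp, map_add, map_smul, Matrix.trace_add, Matrix.trace_smul]
    push_cast
    match_scalars <;> (try field_simp; try ring)
  have φsmul : ∀ (c : K) (m : Matrix (Fin 3) (Fin 3) K), φ (c • m) = c • φ m := by
    intro c m
    have := φlin c m 0
    simpa [φzero] using this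
  have φtr : ∀ m : Matrix (Fin 3) (Fin 3) K, (φ m).trace = m.trace := by
    intro m
    rw [φdef, Matrix.trace_add, Matrix.trace_smul, sl3_trace (f (sl3.proj m)),
      Matrix.trace_one]
    simp
    try ring
  have φx : ∀ x : sl3 K, φ (x : Matrix (Fin 3) (Fin 3) K) = (f x : Matrix (Fin 3) (Fin 3) K) := by
    intro x
    have h1 : sl3.proj ((x : Matrix (Fin 3) (Fin 3) K)) = x := Subtype.ext (by
      rw [φproj, sl3_trace x]; simp)
    rw [φdef, h1, sl3_trace x]
    simp
  -- multiplicativity of φ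
  have φmul : ∀ m n : Matrix (Fin 3) (Fin 3) K, φ (m * n) = φ m * φ n := by
    intro m n
    obtain ⟨z, hz1, hz2⟩ := hmul (sl3.proj m) (sl3.proj n)
    set a := m.trace / 3 with ha
    set b := n.trace / 3 with hb
    set X := ((sl3.proj m : sl3 K) : Matrix (Fin 3) (Fin 3) K) with hX
    set Y := ((sl3.proj n : sl3 K) : Matrix (Fin 3) (Fin 3) K) with hY
    have hXtr : X.trace = 0 := sl3_trace _
    have hYtr : Y.trace = 0 := sl3_trace _
    have hmX : m = X + a • 1 := by rw [hX, φproj]; abel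
    have hnY : n = Y + b • 1 := by rw [hY, φproj]; abel
    have expand : ∀ (U V : Matrix (Fin 3) (Fin 3) K) (s t : K),
        (U + s • 1) * (V + t • 1) = U * V + t • U + s • V + (s * t) • 1 := by
      intro U V s t
      simp only [add_mul, mul_add, smul_mul_assoc, mul_smul_comm, one_mul, mul_one]
      module
    have hXY : m * n = X * Y + b • X + a • Y + (a * b) • 1 := by
      rw [hmX, hnY, expand]
    have htrmn : (m * n).trace = (X * Y).trace + 3 * (a * b) := by
      rw [hXY]
      simp only [Matrix.trace_add, Matrix.trace_smul, Matrix.trace_one, hXtr, hYtr,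
        smul_eq_mul, smul_zero, mul_zero, add_zero, zero_add, Nat.cast_ofNat,
        Fintype.card_fin]
      try ring
    have hψmn : sl3.proj (m * n) = z + b • sl3.proj m + a • sl3.proj n := by
      apply Subtype.ext
      show (m * n) - ((m * n).trace / 3) • 1 = _
      have hco : ((z + b • sl3.proj m + a • sl3.proj n : sl3 K) : Matrix (Fin 3) (Fin 3) K)
          = (z : Matrix (Fin 3) (Fin 3) K) + b • X + a • Y := rfl
      rw [hco, hz1, htrmn, hXY]
      match_scalars <;> (try field_simp; try ring)
    have hfψ : (f (sl3.proj (m * n)) : Matrix (Fin 3) (Fin 3) K)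
        = (f z : Matrix (Fin 3) (Fin 3) K) + b • (f (sl3.proj m) : Matrix (Fin 3) (Fin 3) K) + a • (f (sl3.proj n) : Matrix (Fin 3) (Fin 3) K) := by
      rw [hψmn, map_add, map_add, map_smul, map_smul]
      rfl
    rw [φdef, φdef, φdef, htrmn, hfψ, hz2, expand]
    match_scalars <;> (try field_simp; try ring)
  -- matrix units
  set E : Fin 3 → Matrix (Fin 3) (Fin 3) K := fun k => Matrix.single k 0 (1 : K) with hE
  have hE00 : E 0 * E 0 = E 0 := by
    rw [hE]
    simp
  have hφE0 : φ (E 0) ≠ 0 := by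
    intro h0
    have h1 : (φ (E 0)).trace = 1 := by
      rw [φtr]
      simp [hE, Matrix.trace, Matrix.diag, Fin.sum_univ_three, Matrix.single]
    rw [h0] at h1
    simp at h1
  obtain ⟨i0, c0, hic⟩ : ∃ i c, φ (E 0) i c ≠ 0 := by
    by_contra hcon
    push_neg at hcon
    exact hφE0 (Matrix.ext fun i j => hcon i j)
  set v : Fin 3 → K := fun i => φ (E 0) i c0 with hv
  have hv0 : v ≠ 0 := fun h => hic (congrFun h i0)
  have hvfix : φ (E 0) *ᵥ v = v := by
    have h1 : v = φ (E 0) *ᵥ Pi.single c0 1 := by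
      funext i; simp [Matrix.mulVec_single, hv]
    rw [h1, Matrix.mulVec_mulVec, ← φmul, hE00]
  -- the matrix p
  set p : Matrix (Fin 3) (Fin 3) K := Matrix.of (fun i j => (φ (E j) *ᵥ v) i) with hp
  -- m * E j is a combination of the E k
  have mEj : ∀ (m : Matrix (Fin 3) (Fin 3) K) (j : Fin 3), m * E j = ∑ k, m k j • E k := by
    intro m j
    rw [hE]
    refine Matrix.ext fun a b => ?_
    by_cases hb : b = 0
    · subst hb
      rw [Matrix.mul_single_apply_same]
      simp [Matrix.sum_apply, Matrix.single, Fin.sum_univ_three]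
    · rw [Matrix.mul_single_apply_of_ne _ _ _ a b hb]
      simp [Matrix.sum_apply, Matrix.single, Fin.sum_univ_three, Ne.symm hb]
  have φsum3 : ∀ (c : Fin 3 → K), φ (∑ k, c k • E k) = ∑ k, c k • φ (E k) := by
    intro c
    rw [Fin.sum_univ_three, Fin.sum_univ_three]
    rw [show c 0 • E 0 + c 1 • E 1 + c 2 • E 2 = c 0 • E 0 + (c 1 • E 1 + c 2 • E 2) by abel]
    rw [φlin, φlin, φsmul]
    abel
  have pm_eq : ∀ m : Matrix (Fin 3) (Fin 3) K, p * m = φ m * p := by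
    intro m
    ext i j
    have h1 : (φ m * p) i j = ((φ m * φ (E j)) *ᵥ v) i := by
      rw [← Matrix.mulVec_mulVec]
      simp [Matrix.mul_apply, Matrix.mulVec, dotProduct, hp, Fin.sum_univ_three]
    rw [h1, ← φmul, mEj, φsum3]
    simp [Matrix.mul_apply, hp, Fin.sum_univ_three, Matrix.add_mulVec,
      Matrix.smul_mulVec, Pi.add_apply, Pi.smul_apply, smul_eq_mul]
    ring
  -- p is invertible
  have hdet : p.det ≠ 0 := by
    intro h0
    obtain ⟨w, hw0, hww⟩ := Matrix.exists_mulVec_eq_zero_iff.mpr h0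
    have h1 : p *ᵥ w = φ (∑ j, w j • E j) *ᵥ v := by
      rw [φsum3]
      funext i
      simp [hp, Matrix.mulVec, dotProduct, Fin.sum_univ_three, Matrix.add_mulVec,
        Matrix.smul_mulVec, Pi.add_apply, Pi.smul_apply, smul_eq_mul]
      ring
    have hkey : ∀ k, w k • v = 0 := by
      intro k
      have h2 : Matrix.single 0 k (1 : K) * (∑ j, w j • E j) = w k • E 0 := by
        rw [Finset.mul_sum]
        have : ∀ j : Fin 3, Matrix.single 0 k (1 : K) * (w j • E j)
            = if k = j then w j • E 0 else 0 := by
          intro j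
          rw [hE, Matrix.mul_smul]
          by_cases hkj : k = j
          · subst hkj
            simp [Matrix.single_mul_single_same]
          · rw [Matrix.single_mul_single_of_ne (h := hkj), smul_zero, if_neg hkj]
        rw [Fin.sum_univ_three, this 0, this 1, this 2]
        fin_cases k <;> simp
      have h3 : φ (Matrix.single 0 k (1 : K)) *ᵥ (φ (∑ j, w j • E j) *ᵥ v) = 0 := by
        rw [← h1, hww, Matrix.mulVec_zero]
      rw [Matrix.mulVec_mulVec, ← φmul, h2, φsmul, Matrix.smul_mulVec, hvfix] at h3
      exact h3
    apply hw0
    funext k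
    rcases smul_eq_zero.mp (hkey k) with h | h
    · exact h
    · exact absurd h hv0
  have hdet' : IsUnit p.det := isUnit_iff_ne_zero.mpr hdet
  refine ⟨p, (Matrix.isUnit_iff_isUnit_det p).mpr hdet', ?_⟩
  intro x
  have h1 := pm_eq ((x : Matrix (Fin 3) (Fin 3) K))
  rw [φx x] at h1
  have hinv : p * p⁻¹ = 1 := Matrix.mul_nonsing_inv p hdet'
  calc (f x : Matrix (Fin 3) (Fin 3) K) = (f x : Matrix (Fin 3) (Fin 3) K) * (p * p⁻¹) := by rw [hinv, mul_one]
    _ = ((f x : Matrix (Fin 3) (Fin 3) K) * p) * p⁻¹ := by rw [mul_assoc]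
    _ = (p * (x : Matrix (Fin 3) (Fin 3) K)) * p⁻¹ := by rw [← h1]
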